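/- Let N ≥ 2 and let Γ be a real N×N matrix such that all off-diagonal entries are strictly negative, Γ_{mn} < 0 for m ≠ n, and such that there exists a vector v with all components strictly positive satisfying Γv = 0. Then 0 is a simple (algebraically simple) eigenvalue of Γ and every other eigenvalue λ of Γ (over ℂ) satisfies Re λ > 0. -/

import Mathlib

open Matrix Polynomial Finset

private lemma pf_key {N : ℕ} (hN : 2 ≤ N) (Γ : Matrix (Fin N) (Fin N) ℝ)
    (hoff : ∀ m n : Fin N, m ≠ n → Γ m n < 0)
    (v : Fin N → ℝ) (hv : ∀ i, 0 < v i) (hΓv : Γ.mulVec v = 0)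
    (w : Fin N → ℝ) (c : ℝ) (h : Γ.mulVec w = c • v) :
    c ≤ 0 ∧ (c = 0 → ∃ t : ℝ, w = t • v) := by
  haveI : NeZero N := ⟨by omega⟩
  obtain ⟨m, -, hm⟩ := Finset.exists_min_image Finset.univ (fun i => w i / v i)
    Finset.univ_nonempty
  set t : ℝ := w m / v m with ht
  have hu : ∀ n, t * v n ≤ w n := by
    intro n
    have h1 := hm n (Finset.mem_univ n)
    rw [div_le_div_iff₀ (hv m) (hv n)] at h1
    rw [ht, div_mul_eq_mul_div, div_le_iff₀ (hv m)]
    linarith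
  have hum : w m - t * v m = 0 := by
    rw [ht, div_mul_cancel₀ _ (hv m).ne']
    ring
  have hrowv : ∑ n, Γ m n * v n = 0 := congrFun hΓv m
  have hroww : ∑ n, Γ m n * w n = c * v m := congrFun h m
  have hrow : ∑ n ∈ Finset.univ.erase m, Γ m n * (w n - t * v n) = c * v m := by
    have : ∑ n, Γ m n * (w n - t * v n) = c * v m := by
      simp only [mul_sub, Finset.sum_sub_distrib]
      rw [hroww]
      have : ∑ n, Γ m n * (t * v n) = t * ∑ n, Γ m n * v n := by
        rw [Finset.mul_sum]; congr 1; funext n; ring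
      rw [this, hrowv]
      ring
    rw [← this, ← Finset.add_sum_erase _ _ (Finset.mem_univ m), hum, mul_zero, zero_add]
  have hterms : ∀ n ∈ Finset.univ.erase m, Γ m n * (w n - t * v n) ≤ 0 := by
    intro n hn
    have hne : n ≠ m := Finset.ne_of_mem_erase hn
    exact mul_nonpos_of_nonpos_of_nonneg (hoff m n (Ne.symm hne)).le (by linarith [hu n])
  have hsum : c * v m ≤ 0 := hrow ▸ Finset.sum_nonpos hterms
  have hcle : c ≤ 0 := by nlinarith [hv m]
  refine ⟨hcle, fun hc => ?_⟩
  subst hc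
  rw [zero_mul] at hrow
  have hzero := (Finset.sum_eq_zero_iff_of_nonpos hterms).mp hrow
  refine ⟨t, funext fun n => ?_⟩
  by_cases hn : n = m
  · subst hn; simpa [sub_eq_zero] using hum
  · have := hzero n (Finset.mem_erase.mpr ⟨hn, Finset.mem_univ n⟩)
    have h2 : w n - t * v n = 0 := by
      rcases mul_eq_zero.mp this with h' | h'
      · exact absurd h' (hoff m n (Ne.symm hn)).ne
      · exact h'
    simp [Pi.smul_apply, smul_eq_mul]
    linarith

private lemma pf_ckey {N : ℕ} (hN : 2 ≤ N) (Γ : Matrix (Fin N) (Fin N) ℝ)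
    (hoff : ∀ m n : Fin N, m ≠ n → Γ m n < 0)
    (v : Fin N → ℝ) (hv : ∀ i, 0 < v i) (hΓv : Γ.mulVec v = 0)
    (w : Fin N → ℂ) (c : ℂ)
    (h : (Γ.map Complex.ofReal).mulVec w = c • (fun i => (v i : ℂ))) :
    c = 0 ∧ ∃ t : ℂ, w = t • (fun i => (v i : ℂ)) := by
  have hc : ∀ m, ∑ n, (Γ m n : ℂ) * w n = c * (v m : ℂ) := by
    intro m
    have := congrFun h m
    simpa [Matrix.mulVec, dotProduct, Matrix.map_apply] using this
  have hre : Γ.mulVec (fun n => (w n).re) = c.re • v := by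
    funext m
    have := congrArg Complex.re (hc m)
    simpa [Complex.mul_re, Matrix.mulVec, dotProduct] using this
  have him : Γ.mulVec (fun n => (w n).im) = c.im • v := by
    funext m
    have := congrArg Complex.im (hc m)
    simpa [Complex.mul_im, Matrix.mulVec, dotProduct] using this
  have hreneg : Γ.mulVec (fun n => -(w n).re) = (-c.re) • v := by
    funext m
    have := congrFun hre m
    simp only [Matrix.mulVec, dotProduct] at this ⊢
    simp only [mul_neg, Finset.sum_neg_distrib, this]
    simp [neg_smul]
  have himneg : Γ.mulVec (fun n => -(w n).im) = (-c.im) • v := by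
    funext m
    have := congrFun him m
    simp only [Matrix.mulVec, dotProduct] at this ⊢
    simp only [mul_neg, Finset.sum_neg_distrib, this]
    simp [neg_smul]
  have h1 := (pf_key hN Γ hoff v hv hΓv _ _ hre).1
  have h2 := (pf_key hN Γ hoff v hv hΓv _ _ hreneg).1
  have h3 := (pf_key hN Γ hoff v hv hΓv _ _ him).1
  have h4 := (pf_key hN Γ hoff v hv hΓv _ _ himneg).1
  have hcre : c.re = 0 := by linarith
  have hcim : c.im = 0 := by linarith
  have hczero : c = 0 := Complex.ext hcre hcim
  subst hczero
  rw [hcre] at hre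
  rw [hcim] at him
  simp only [zero_smul] at hre him
  obtain ⟨tr, htr⟩ := (pf_key hN Γ hoff v hv hΓv _ _ (by simpa using hre)).2 rfl
  obtain ⟨ti, hti⟩ := (pf_key hN Γ hoff v hv hΓv _ _ (by simpa using him)).2 rfl
  refine ⟨rfl, ⟨(tr : ℂ) + (ti : ℂ) * Complex.I, funext fun n => ?_⟩⟩
  have h5 : (w n).re = tr * v n := by simpa using congrFun htr n
  have h6 : (w n).im = ti * v n := by simpa using congrFun hti n
  apply Complex.ext <;> simp [Complex.add_re, Complex.mul_re, Complex.mul_im, h5, h6] <;> ring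

private lemma pf_part1 {N : ℕ} (hN : 2 ≤ N)
    (Γ : Matrix (Fin N) (Fin N) ℝ)
    (hoff : ∀ m n : Fin N, m ≠ n → Γ m n < 0)
    (v : Fin N → ℝ) (hv : ∀ i, 0 < v i) (hΓv : Γ.mulVec v = 0) :
    ((Γ.map (Complex.ofReal)).charpoly).rootMultiplicity 0 = 1 := by
  haveI : NeZero N := ⟨by omega⟩
  set Γc := Γ.map (Complex.ofReal) with hΓc
  set vc : Fin N → ℂ := fun i => (v i : ℂ) with hvc
  set b := Pi.basisFun ℂ (Fin N) with hb
  set φ : Module.End ℂ (Fin N → ℂ) := Matrix.toLin b b Γc with hφ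
  have hφapp : ∀ x, φ x = Γc.mulVec x := by
    intro x
    rw [hφ, hb, Matrix.toLin_eq_toLin', Matrix.toLin'_apply]
  have hchar : Γc.charpoly = LinearMap.charpoly φ := by
    rw [hφ, ← LinearMap.charpoly_toMatrix (Matrix.toLin b b Γc) b, LinearMap.toMatrix_toLin]
  have hvc0 : vc ≠ 0 := by
    intro hcon
    have := congrFun hcon ⟨0, by omega⟩
    simp only [hvc, Pi.zero_apply, Complex.ofReal_eq_zero] at this
    exact (hv _).ne' this
  have hmulvc : Γc.mulVec vc = 0 := by
    funext m
    have := congrFun hΓv m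
    simp only [Matrix.mulVec, dotProduct, Pi.zero_apply] at this ⊢
    rw [hΓc, hvc]
    push_cast
    simp only [Matrix.map_apply]
    exact_mod_cast congrArg Complex.ofReal this
  -- key: φ∘φ x = 0 → φ x = 0
  have hker2 : ∀ x, φ (φ x) = 0 → φ x = 0 := by
    intro x hx
    rw [hφapp, hφapp] at hx
    obtain ⟨t, hty⟩ := (pf_ckey hN Γ hoff v hv hΓv (Γc.mulVec x) 0
      (by rw [zero_smul]; exact hx)).2
    have := (pf_ckey hN Γ hoff v hv hΓv x t hty).1
    rw [hφapp, hty, this, zero_smul]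
  have hpow : ∀ (k : ℕ) (y : Fin N → ℂ), (φ ^ k) y = 0 → φ y = 0 := by
    intro k
    induction k with
    | zero => intro y hy; simp only [pow_zero, Module.End.one_apply] at hy; simp [hy]
    | succ k ih =>
      intro y hy
      rw [pow_succ, Module.End.mul_apply] at hy
      exact hker2 y (ih (φ y) hy)
  have hEq : φ.maxGenEigenspace 0 = Submodule.span ℂ {vc} := by
    apply le_antisymm
    · intro x hx
      rw [Module.End.mem_maxGenEigenspace] at hx
      obtain ⟨k, hk⟩ := hx
      simp only [zero_smul, sub_zero] at hk
      have hx0 : φ x = 0 := hpow k x hk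
      rw [hφapp] at hx0
      obtain ⟨t, ht⟩ := (pf_ckey hN Γ hoff v hv hΓv x 0 (by rw [zero_smul]; exact hx0)).2
      rw [ht]
      exact Submodule.smul_mem _ t (Submodule.mem_span_singleton_self vc)
    · rw [Submodule.span_singleton_le_iff_mem]
      rw [Module.End.mem_maxGenEigenspace]
      exact ⟨1, by simp only [zero_smul, sub_zero, pow_one]; rw [hφapp]; exact hmulvc⟩
  rw [hΓc] at hchar ⊢
  rw [hchar, Polynomial.rootMultiplicity_eq_natTrailingDegree',
    ← LinearMap.finrank_maxGenEigenspace_zero_eq, hEq]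
  exact finrank_span_singleton hvc0

private lemma pf_part2 {N : ℕ} (hN : 2 ≤ N)
    (Γ : Matrix (Fin N) (Fin N) ℝ)
    (hoff : ∀ m n : Fin N, m ≠ n → Γ m n < 0)
    (v : Fin N → ℝ) (hv : ∀ i, 0 < v i) (hΓv : Γ.mulVec v = 0) :
    ∀ z : ℂ, ((Γ.map (Complex.ofReal)).charpoly).IsRoot z → z ≠ 0 → 0 < z.re := by
  intro z hroot hz
  set Γc := Γ.map (Complex.ofReal) with hΓc
  -- determinant vanishes
  have hdet : (Matrix.scalar (Fin N) z - Γc).det = 0 := by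
    have h0 := hroot
    rw [IsRoot.def, Matrix.charpoly, _root_.eval_det, matPolyEquiv_charmatrix] at h0
    simpa using h0
  obtain ⟨w, hw0, hww⟩ := Matrix.exists_mulVec_eq_zero_iff.mpr hdet
  have heig : Γc.mulVec w = z • w := by
    have h1 : (Matrix.scalar (Fin N) z).mulVec w = z • w := by
      funext m
      simp [Matrix.scalar, Matrix.mulVec, dotProduct, Matrix.diagonal_apply,
        Finset.sum_ite_eq, Finset.mem_univ]
    have := hww
    rw [Matrix.sub_mulVec, sub_eq_zero] at this
    rw [← this, h1]
  have hcomp : ∀ m, ∑ n, (Γ m n : ℂ) * w n = z * w m := by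
    intro m
    have := congrFun heig m
    simpa [Matrix.mulVec, dotProduct, Matrix.map_apply, hΓc] using this
  -- conjugated matrix
  set A : Matrix (Fin N) (Fin N) ℝ := Matrix.of (fun m n => Γ m n * v n / v m) with hA
  set Ac : Matrix (Fin N) (Fin N) ℂ := A.map Complex.ofReal with hAc
  set w' : Fin N → ℂ := fun n => w n * ((v n : ℝ) : ℂ)⁻¹ with hw'
  have hvne0 : ∀ n, ((v n : ℝ) : ℂ) ≠ 0 := fun n => by
    exact_mod_cast Complex.ofReal_ne_zero.mpr (hv n).ne'
  have hAeig : Ac.mulVec w' = z • w' := by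
    funext m
    have hterm : ∀ n, ((Γ m n * v n / v m : ℝ) : ℂ) * (w n * ((v n : ℝ) : ℂ)⁻¹)
        = ((v m : ℝ) : ℂ)⁻¹ * (((Γ m n : ℝ) : ℂ) * w n) := by
      intro n
      push_cast
      field_simp [hvne0 n, hvne0 m]
    calc (Ac.mulVec w') m = ∑ n, ((Γ m n * v n / v m : ℝ) : ℂ) * (w n * ((v n : ℝ) : ℂ)⁻¹) := by
          simp [Matrix.mulVec, dotProduct, hAc, hA, Matrix.map_apply, hw']
      _ = ∑ n, ((v m : ℝ) : ℂ)⁻¹ * (((Γ m n : ℝ) : ℂ) * w n) := by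
          exact Finset.sum_congr rfl fun n _ => hterm n
      _ = ((v m : ℝ) : ℂ)⁻¹ * ∑ n, (((Γ m n : ℝ) : ℂ) * w n) := by rw [Finset.mul_sum]
      _ = ((v m : ℝ) : ℂ)⁻¹ * (z * w m) := by rw [hcomp m]
      _ = (z • w') m := by simp [hw']; ring
  have hw'0 : w' ≠ 0 := by
    intro hcon
    apply hw0
    funext n
    have := congrFun hcon n
    simp only [hw', Pi.zero_apply, mul_eq_zero] at this
    rcases this with h | h
    · exact h
    · exact absurd h (inv_ne_zero (hvne0 n))
  have hEigval : Module.End.HasEigenvalue (Matrix.toLin' Ac) z := by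
    apply Module.End.hasEigenvalue_of_hasEigenvector (x := w')
    refine ⟨Module.End.mem_eigenspace_iff.mpr ?_, hw'0⟩
    rw [Matrix.toLin'_apply, hAeig]
  obtain ⟨k, hk⟩ := eigenvalue_mem_ball hEigval
  -- diagonal positivity
  have hrowk : ∑ n, Γ k n * v n = 0 := congrFun hΓv k
  have hne : (Finset.univ.erase k).Nonempty := by
    obtain ⟨j, hj⟩ := Fintype.exists_ne_of_one_lt_card (by simp; omega) k
    exact ⟨j, Finset.mem_erase.mpr ⟨hj, Finset.mem_univ j⟩⟩
  have hsumneg : ∑ n ∈ Finset.univ.erase k, Γ k n * v n < 0 := by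
    apply Finset.sum_neg
    · intro n hn
      exact mul_neg_of_neg_of_pos (hoff k n (Ne.symm (Finset.ne_of_mem_erase hn))) (hv n)
    · exact hne
  have hsplit : Γ k k * v k + ∑ n ∈ Finset.univ.erase k, Γ k n * v n = 0 := by
    have h0 := Finset.add_sum_erase Finset.univ (fun n => Γ k n * v n) (Finset.mem_univ k)
    linarith
  have hdiagpos : 0 < Γ k k := by nlinarith [hv k]
  -- radius computation
  have hAkk : Ac k k = ((Γ k k : ℝ) : ℂ) := by
    simp [hAc, hA, Matrix.map_apply, mul_div_assoc, div_self (hv k).ne']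
  have hradius : ∑ j ∈ Finset.univ.erase k, ‖Ac k j‖ = Γ k k := by
    have : ∀ j ∈ Finset.univ.erase k, ‖Ac k j‖ = -(Γ k j * v j) / v k := by
      intro j hj
      have hneg : Γ k j * v j / v k < 0 :=
        div_neg_of_neg_of_pos
          (mul_neg_of_neg_of_pos (hoff k j (Ne.symm (Finset.ne_of_mem_erase hj))) (hv j)) (hv k)
      simp only [hAc, hA, Matrix.map_apply, Matrix.of_apply, Complex.norm_real]
      rw [Real.norm_eq_abs, abs_of_neg hneg]
      ring
    rw [Finset.sum_congr rfl this, ← Finset.sum_div, Finset.sum_neg_distrib]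
    have h2 : ∑ n ∈ Finset.univ.erase k, Γ k n * v n = -(Γ k k * v k) := by linarith
    rw [h2, neg_neg, mul_div_assoc, div_self (hv k).ne', mul_one]
  -- conclude
  rw [Metric.mem_closedBall, hAkk, hradius, Complex.dist_eq] at hk
  set a := Γ k k
  have habs2 : (z.re - a)^2 + z.im^2 ≤ a^2 := by
    have h1 : ‖z - (a : ℂ)‖ ^ 2 ≤ a ^ 2 := by
      have := norm_nonneg (z - (a : ℂ))
      nlinarith
    rw [Complex.sq_norm, Complex.normSq_apply] at h1
    simpa [Complex.sub_re, Complex.sub_im, Complex.ofReal_re, Complex.ofReal_im, sq] using h1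
  have hzz : 0 < z.re^2 + z.im^2 := by
    have : z.re ≠ 0 ∨ z.im ≠ 0 := by
      by_contra hcon
      push_neg at hcon
      exact hz (Complex.ext hcon.1 hcon.2)
    rcases this with h | h
    · nlinarith [mul_self_pos.mpr h, sq_nonneg z.im]
    · nlinarith [mul_self_pos.mpr h, sq_nonneg z.re]
  nlinarith

/-- Perron–Frobenius type result: if a real `N×N` matrix has strictly negative
off-diagonal entries and annihilates a strictly positive vector, then `0` is an
algebraically simple eigenvalue and every other (complex) eigenvalue has
strictly positive real part. -/
theorem perron_frobenius_level_shift {N : ℕ} (hN : 2 ≤ N)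
    (Γ : Matrix (Fin N) (Fin N) ℝ)
    (hoff : ∀ m n : Fin N, m ≠ n → Γ m n < 0)
    (v : Fin N → ℝ) (hv : ∀ i, 0 < v i) (hΓv : Γ.mulVec v = 0) :
    ((Γ.map (Complex.ofReal)).charpoly).rootMultiplicity 0 = 1 ∧
    ∀ z : ℂ, ((Γ.map (Complex.ofReal)).charpoly).IsRoot z → z ≠ 0 → 0 < z.re :=
  ⟨pf_part1 hN Γ hoff v hv hΓv, pf_part2 hN Γ hoff v hv hΓv⟩
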